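/- For n ≡ 0 or 3 (mod 4), any two elements of AM_n of rank n-1 are J-related in AM_n. -/

import Mathlib

/-- Partial transformations on `Fin n`, represented as `Option`-valued maps. -/
abbrev PT (n : ℕ) := Fin n → Option (Fin n)

/-- Left-to-right composition of partial maps: `x (pcomp f g) = (x f) g`. -/
def pcomp {n : ℕ} (f g : PT n) : PT n := fun x => (f x).bind g

/-- The identity partial map. -/
def pid (n : ℕ) : PT n := fun x => some x

instance PTMonoid (n : ℕ) : Monoid (PT n) where
  mul := pcomp
  one := pid n
  mul_assoc f g h := funext fun x => by
    show ((f x).bind g).bind h = (f x).bind fun y => (g y).bind h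
    cases f x <;> rfl
  one_mul f := rfl
  mul_one f := funext fun x => by
    show (f x).bind (fun y => some y) = f x
    cases f x <;> rfl

/-- `f` is injective on its domain. -/
def pInj {n : ℕ} (f : PT n) : Prop := ∀ x y a, f x = some a → f y = some a → x = y

/-- The domain of a partial map. -/
def pDom {n : ℕ} (f : PT n) : Finset (Fin n) := Finset.univ.filter fun x => (f x).isSome

/-- The image of a partial map. -/
def pIm {n : ℕ} (f : PT n) : Finset (Fin n) := Finset.univ.filter fun b => ∃ x, f x = some b

/-- The rank of a partial map is the size of its domain. -/
def prank {n : ℕ} (f : PT n) : ℕ := (pDom f).card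

/-- Order-preserving partial maps. -/
def orderPres {n : ℕ} (f : PT n) : Prop :=
  ∀ x y a b, f x = some a → f y = some b → x ≤ y → a ≤ b

/-- Order-reversing partial maps. -/
def orderRev {n : ℕ} (f : PT n) : Prop :=
  ∀ x y a b, f x = some a → f y = some b → x ≤ y → b ≤ a

/-- Monotone partial maps. -/
def isMonotonePT {n : ℕ} (f : PT n) : Prop := orderPres f ∨ orderRev f

/-- The permutation `σ` extends the partial map `f`. -/
def extendsTo {n : ℕ} (σ : Equiv.Perm (Fin n)) (f : PT n) : Prop :=
  ∀ x a, f x = some a → σ x = a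

/-- Membership in the alternating inverse monoid `AI_n`: an injective partial map of
rank `≤ n - 2`, or one that extends to an even permutation. -/
def inAI {n : ℕ} (f : PT n) : Prop :=
  pInj f ∧ (prank f + 2 ≤ n ∨
    ∃ σ : Equiv.Perm (Fin n), σ ∈ alternatingGroup (Fin n) ∧ extendsTo σ f)

/-- `AO_n = AI_n ∩ POI_n`. -/
def AO (n : ℕ) : Set (PT n) := {f | orderPres f ∧ inAI f}

/-- `AM_n = AI_n ∩ PMI_n`. -/
def AM (n : ℕ) : Set (PT n) := {f | isMonotonePT f ∧ inAI f}

/-- Green's `J`-relation relative to a submonoid-like subset `S` (containing the identity):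
`a J b` iff each lies in the two-sided principal ideal of the other. -/
def JRelIn {n : ℕ} (S : Set (PT n)) (a b : PT n) : Prop :=
  (∃ u v, u ∈ S ∧ v ∈ S ∧ a = u * b * v) ∧ (∃ u v, u ∈ S ∧ v ∈ S ∧ b = u * a * v)

namespace Stmt10Aux
open Equiv Equiv.Perm

variable {N : ℕ}

/-- strictly monotone off the point `s`. -/
def monoOff (σ : Perm (Fin N)) (s : Fin N) : Prop :=
  ∀ ⦃x y : Fin N⦄, x ≠ s → y ≠ s → x < y → σ x < σ y

def antiOff (σ : Perm (Fin N)) (s : Fin N) : Prop :=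
  ∀ ⦃x y : Fin N⦄, x ≠ s → y ≠ s → x < y → σ y < σ x

def mixOff (σ : Perm (Fin N)) (s : Fin N) : Prop := monoOff σ s ∨ antiOff σ s

lemma monoOff_symm {σ : Perm (Fin N)} {s : Fin N} (h : monoOff σ s) :
    monoOff σ.symm (σ s) := by
  intro u v hu hv huv
  have hx : σ.symm u ≠ s := fun e => hu (by rw [← (Equiv.symm_apply_eq σ).mp e])
  have hy : σ.symm v ≠ s := fun e => hv (by rw [← (Equiv.symm_apply_eq σ).mp e])
  rcases lt_trichotomy (σ.symm u) (σ.symm v) with h1 | h1 | h1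
  · exact h1
  · exact absurd (σ.symm.injective.ne (ne_of_lt huv)) (by simp [h1])
  · have := h hy hx h1
    rw [Equiv.apply_symm_apply, Equiv.apply_symm_apply] at this
    exact absurd huv (not_lt_of_gt this)

lemma antiOff_symm {σ : Perm (Fin N)} {s : Fin N} (h : antiOff σ s) :
    antiOff σ.symm (σ s) := by
  intro u v hu hv huv
  have hx : σ.symm u ≠ s := fun e => hu (by rw [← (Equiv.symm_apply_eq σ).mp e])
  have hy : σ.symm v ≠ s := fun e => hv (by rw [← (Equiv.symm_apply_eq σ).mp e])
  rcases lt_trichotomy (σ.symm v) (σ.symm u) with h1 | h1 | h1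
  · exact h1
  · exact absurd (σ.symm.injective.ne (ne_of_lt huv)) (by simp [h1])
  · have := h hx hy h1
    rw [Equiv.apply_symm_apply, Equiv.apply_symm_apply] at this
    exact absurd huv (not_lt_of_gt this)

lemma mixOff_symm {σ : Perm (Fin N)} {s : Fin N} (h : mixOff σ s) :
    mixOff σ.symm (σ s) :=
  h.elim (fun h => Or.inl (monoOff_symm h)) (fun h => Or.inr (antiOff_symm h))

lemma mixOff_trans {σ τ : Perm (Fin N)} {s : Fin N} (h1 : mixOff σ s)
    (h2 : mixOff τ (σ s)) : mixOff (σ.trans τ) s := by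
  have key : ∀ x : Fin N, x ≠ s → σ x ≠ σ s := fun x hx => σ.injective.ne hx
  rcases h1 with h1 | h1 <;> rcases h2 with h2 | h2
  · exact Or.inl fun x y hx hy hxy => h2 (key x hx) (key y hy) (h1 hx hy hxy)
  · exact Or.inr fun x y hx hy hxy => h2 (key x hx) (key y hy) (h1 hx hy hxy)
  · exact Or.inr fun x y hx hy hxy => h2 (key y hy) (key x hx) (h1 hx hy hxy)
  · exact Or.inl fun x y hx hy hxy => h2 (key y hy) (key x hx) (h1 hx hy hxy)

/-- restriction of a permutation to the complement of `{s}`, as a partial map. -/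
def toPT (σ : Perm (Fin N)) (s : Fin N) : PT N := fun x => if x = s then none else some (σ x)

lemma toPT_mem_AM {σ : Perm (Fin N)} {s : Fin N} (hm : mixOff σ s)
    (hs : Equiv.Perm.sign σ = 1) : toPT σ s ∈ AM N := by
  refine ⟨?_, ?_, Or.inr ⟨σ, Equiv.Perm.mem_alternatingGroup.mpr hs, ?_⟩⟩
  · rcases hm with hm | hm
    · refine Or.inl fun x y a b hx hy hxy => ?_
      simp only [toPT] at hx hy
      split_ifs at hx hy with h1 h2
      obtain ⟨rfl⟩ : σ x = a := by injection hx
      obtain ⟨rfl⟩ : σ y = b := by injection hy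
      rcases eq_or_lt_of_le hxy with rfl | hlt
      · exact le_refl _
      · exact (hm h1 h2 hlt).le
    · refine Or.inr fun x y a b hx hy hxy => ?_
      simp only [toPT] at hx hy
      split_ifs at hx hy with h1 h2
      obtain ⟨rfl⟩ : σ x = a := by injection hx
      obtain ⟨rfl⟩ : σ y = b := by injection hy
      rcases eq_or_lt_of_le hxy with rfl | hlt
      · exact le_refl _
      · exact (hm h1 h2 hlt).le
  · intro x y a hx hy
    simp only [toPT] at hx hy
    split_ifs at hx hy
    have : σ x = σ y := by
      have h1 : σ x = a := by injection hx
      have h2 : σ y = a := by injection hy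
      rw [h1, h2]
    exact σ.injective this
  · intro x a hx
    simp only [toPT] at hx
    split_ifs at hx
    injection hx

lemma toPT_mul (σ τ : Perm (Fin N)) (s : Fin N) :
    toPT σ s * toPT τ (σ s) = toPT (σ.trans τ) s := by
  funext x
  show (toPT σ s x).bind (toPT τ (σ s)) = toPT (σ.trans τ) s x
  by_cases hx : x = s
  · subst hx; simp [toPT]
  · simp only [toPT, if_neg hx, Option.bind_some, if_neg (σ.injective.ne hx),
      Equiv.trans_apply]

lemma charAM (f : PT N) (hf : f ∈ AM N) (hr : prank f = N - 1) (hN : 1 ≤ N) :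
    ∃ (s : Fin N) (σ : Perm (Fin N)), f = toPT σ s ∧ Equiv.Perm.sign σ = 1 ∧ mixOff σ s := by
  have hcard : ((pDom f)ᶜ : Finset (Fin N)).card = 1 := by
    rw [Finset.card_compl, Fintype.card_fin]
    have : (pDom f).card = N - 1 := hr
    omega
  obtain ⟨s, hs⟩ := Finset.card_eq_one.mp hcard
  have hdom : ∀ x : Fin N, x ≠ s ↔ (f x).isSome := by
    intro x
    constructor
    · intro hx
      by_contra h
      have : x ∈ (pDom f)ᶜ := by
        simp only [pDom, Finset.mem_compl, Finset.mem_filter, Finset.mem_univ, true_and]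
        exact h
      rw [hs] at this
      exact hx (Finset.mem_singleton.mp this)
    · intro hx hxs
      have : s ∈ (pDom f)ᶜ := by rw [hs]; exact Finset.mem_singleton_self s
      rw [Finset.mem_compl] at this
      subst hxs
      exact this (by simp [pDom, hx])
  obtain ⟨hmono, hinj, hAI⟩ := hf
  rcases hAI with hAI | ⟨σ, hσalt, hσext⟩
  · rw [hr] at hAI; omega
  have hval : ∀ x : Fin N, x ≠ s → f x = some (σ x) := by
    intro x hx
    obtain ⟨a, ha⟩ := Option.isSome_iff_exists.mp ((hdom x).mp hx)
    rw [ha, hσext x a ha]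
  have hnone : f s = none := by
    have := (hdom s).not.mp (by simp)
    simpa [Option.not_isSome_iff_eq_none] using this
  refine ⟨s, σ, ?_, Equiv.Perm.mem_alternatingGroup.mp hσalt, ?_⟩
  · funext x
    by_cases hx : x = s
    · subst hx; simp [toPT, hnone]
    · rw [hval x hx]; simp [toPT, hx]
  · rcases hmono with hm | hm
    · refine Or.inl fun x y hx hy hxy => ?_
      have := hm x y (σ x) (σ y) (hval x hx) (hval y hy) hxy.le
      exact lt_of_le_of_ne this (σ.injective.ne (ne_of_lt hxy))
    · refine Or.inr fun x y hx hy hxy => ?_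
      have := hm x y (σ x) (σ y) (hval x hx) (hval y hy) hxy.le
      exact lt_of_le_of_ne this (σ.injective.ne (Ne.symm (ne_of_lt hxy)))

lemma jhalf {σa σb : Perm (Fin N)} {sa sb : Fin N}
    (ha1 : Equiv.Perm.sign σa = 1) (hb1 : Equiv.Perm.sign σb = 1)
    (hma : mixOff σa sa) (hmb : mixOff σb sb)
    (P : Perm (Fin N)) (hP : P sa = sb) (hPsign : Equiv.Perm.sign P = 1)
    (hPm : mixOff P sa) :
    ∃ u v, u ∈ AM N ∧ v ∈ AM N ∧ toPT σa sa = u * toPT σb sb * v := by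
  set U : Perm (Fin N) := P.trans σb with hU
  set V : Perm (Fin N) := U.symm.trans σa with hV
  have hUsa : U sa = σb sb := by simp [hU, Equiv.trans_apply, hP]
  have mixU : mixOff U sa := mixOff_trans hPm (hP ▸ hmb)
  have mixUsymm : mixOff U.symm (σb sb) := hUsa ▸ mixOff_symm mixU
  have hUsymm : U.symm (σb sb) = sa := by rw [← hUsa, Equiv.symm_apply_apply]
  have mixV : mixOff V (σb sb) := mixOff_trans mixUsymm (hUsymm ▸ hma)
  have hUsign : Equiv.Perm.sign U = 1 := by
    have : U = σb * P := rfl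
    rw [this, map_mul, hb1, hPsign, mul_one]
  have hVsign : Equiv.Perm.sign V = 1 := by
    have : V = σa * U.symm := rfl
    rw [this, map_mul, ha1, Equiv.Perm.sign_symm, hUsign, mul_one]
  refine ⟨toPT P sa, toPT V (σb sb), toPT_mem_AM hPm hPsign, toPT_mem_AM mixV hVsign, ?_⟩
  have e1 : toPT P sa * toPT σb sb = toPT U sa := by
    rw [← hP]; exact toPT_mul P σb sa
  have e2 : toPT U sa * toPT V (σb sb) = toPT σa sa := by
    rw [← hUsa, toPT_mul, hV, ← Equiv.trans_assoc, Equiv.self_trans_symm, Equiv.refl_trans]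
  rw [e1, e2]

/-- The permutation of `Fin (m+1)` sending `t` to `last m`, acting as the order
isomorphism from `univ \ {t}` to `univ \ {last m}`. -/
def Dp {m : ℕ} (t : Fin (m + 1)) : Perm (Fin (m + 1)) :=
  (Fin.revPerm.trans (Fin.cycleRange t.rev)).trans Fin.revPerm

lemma Dp_self {m : ℕ} (t : Fin (m + 1)) : Dp t t = Fin.last m := by
  simp only [Dp, Equiv.trans_apply, Fin.revPerm_apply, Fin.cycleRange_self]
  exact Fin.ext (by simp [Fin.val_rev])

lemma Dp_val_lt {m : ℕ} {t x : Fin (m + 1)} (h : x < t) : ((Dp t x : Fin (m+1)) : ℕ) = x := by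
  simp only [Dp, Equiv.trans_apply, Fin.revPerm_apply]
  rw [Fin.cycleRange_of_gt (by rwa [Fin.rev_lt_rev]), Fin.rev_rev]

lemma Dp_val_gt {m : ℕ} {t x : Fin (m + 1)} (h : t < x) :
    ((Dp t x : Fin (m+1)) : ℕ) = (x : ℕ) - 1 := by
  simp only [Dp, Equiv.trans_apply, Fin.revPerm_apply]
  rw [Fin.cycleRange_of_lt (by rwa [Fin.rev_lt_rev])]
  have hx1 : 1 ≤ (x : ℕ) := by
    have := Fin.lt_def.mp h; omega
  have hrev : (x.rev : ℕ) = m - x := by rw [Fin.val_rev]; omega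
  have hlast : x.rev < Fin.last m := by
    rw [Fin.lt_def, hrev, Fin.val_last]
    have := x.isLt; omega
  have hadd : ((x.rev + 1 : Fin (m+1)) : ℕ) = (x.rev : ℕ) + 1 := Fin.val_add_one_of_lt hlast
  rw [Fin.val_rev, hadd, hrev]
  have := x.isLt; omega

lemma monoOff_Dp {m : ℕ} (t : Fin (m + 1)) : monoOff (Dp t) t := by
  intro x y hx hy hxy
  rw [Fin.lt_def]
  have hxy' := Fin.lt_def.mp hxy
  rcases lt_or_gt_of_ne hx with h1 | h1 <;> rcases lt_or_gt_of_ne hy with h2 | h2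
  · rw [Dp_val_lt h1, Dp_val_lt h2]; exact hxy'
  · rw [Dp_val_lt h1, Dp_val_gt h2]
    have := Fin.lt_def.mp h1; have := Fin.lt_def.mp h2; omega
  · exact absurd (h1.trans (hxy.trans h2)) (lt_irrefl t)
  · rw [Dp_val_gt h1, Dp_val_gt h2]
    have := Fin.lt_def.mp h1; have := Fin.lt_def.mp h2; omega

lemma revPerm_mul_self {M : ℕ} : (Fin.revPerm : Perm (Fin M)) * Fin.revPerm = 1 := by
  ext x
  simp

lemma sign_Dp {m : ℕ} (t : Fin (m + 1)) :
    Equiv.Perm.sign (Dp t) = (-1) ^ ((t.rev : ℕ)) := by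
  have hD : Dp t = Fin.revPerm * Fin.cycleRange t.rev * Fin.revPerm := by
    ext x; rfl
  rw [hD, map_mul, map_mul]
  have h2 : (Equiv.Perm.sign (Fin.revPerm : Perm (Fin (m+1)))) *
      Equiv.Perm.sign (Fin.revPerm : Perm (Fin (m+1))) = 1 := by
    rw [← map_mul, revPerm_mul_self, map_one]
  calc Equiv.Perm.sign (Fin.revPerm : Perm (Fin (m+1))) *
        Equiv.Perm.sign (Fin.cycleRange t.rev) *
        Equiv.Perm.sign (Fin.revPerm : Perm (Fin (m+1)))
      = Equiv.Perm.sign (Fin.cycleRange t.rev) *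
        (Equiv.Perm.sign (Fin.revPerm : Perm (Fin (m+1))) *
         Equiv.Perm.sign (Fin.revPerm : Perm (Fin (m+1)))) := by
        rw [mul_comm (Equiv.Perm.sign (Fin.revPerm : Perm (Fin (m+1))))
          (Equiv.Perm.sign (Fin.cycleRange t.rev)), mul_assoc]
    _ = Equiv.Perm.sign (Fin.cycleRange t.rev) := by rw [h2, mul_one]
    _ = (-1) ^ ((t.rev : ℕ)) := Fin.sign_cycleRange t.rev

/-- order isomorphism `univ \ {s} → univ \ {t}` sending `s ↦ t`, as a permutation. -/
def Phi {m : ℕ} (s t : Fin (m + 1)) : Perm (Fin (m + 1)) := (Dp s).trans (Dp t).symm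

lemma Phi_apply_self {m : ℕ} (s t : Fin (m + 1)) : Phi s t s = t := by
  rw [Phi, Equiv.trans_apply, Dp_self, Equiv.symm_apply_eq, Dp_self]

lemma mixOff_Phi {m : ℕ} (s t : Fin (m + 1)) : mixOff (Phi s t) s := by
  have h1 : mixOff (Dp s) s := Or.inl (monoOff_Dp s)
  have h2 : mixOff (Dp t).symm (Dp s s) := by
    rw [Dp_self, ← Dp_self t]
    exact mixOff_symm (Or.inl (monoOff_Dp t))
  exact mixOff_trans h1 h2

lemma sign_Phi {m : ℕ} (s t : Fin (m + 1)) :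
    Equiv.Perm.sign (Phi s t) = (-1) ^ ((s.rev : ℕ) + (t.rev : ℕ)) := by
  have : Phi s t = (Dp t).symm * Dp s := rfl
  rw [this, map_mul, Equiv.Perm.sign_symm, sign_Dp, sign_Dp, ← pow_add, add_comm]

/-- order anti-isomorphism `univ \ {s} → univ \ {t}` sending `s ↦ t`. -/
def Psi {m : ℕ} (s t : Fin (m + 1)) : Perm (Fin (m + 1)) :=
  (Phi s t.rev).trans Fin.revPerm

lemma Psi_apply_self {m : ℕ} (s t : Fin (m + 1)) : Psi s t s = t := by
  rw [Psi, Equiv.trans_apply, Phi_apply_self, Fin.revPerm_apply, Fin.rev_rev]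

lemma antiOff_revPerm {M : ℕ} (c : Fin M) : antiOff Fin.revPerm c :=
  fun x y _ _ h => by simpa using Fin.rev_lt_rev.mpr h

lemma mixOff_Psi {m : ℕ} (s t : Fin (m + 1)) : mixOff (Psi s t) s :=
  mixOff_trans (mixOff_Phi s t.rev) (Or.inr (antiOff_revPerm _))

def embSucc (n : ℕ) : Fin n ↪ Fin (n + 2) :=
  ⟨fun i => ⟨(i : ℕ) + 1, by omega⟩, fun a b h => by
    apply Fin.ext
    have := Fin.mk.injEq ((a:ℕ)+1) _ ((b:ℕ)+1) _ ▸ h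
    simpa [Fin.ext_iff] using h⟩

lemma embSucc_val (n : ℕ) (i : Fin n) : ((embSucc n i : Fin (n + 2)) : ℕ) = (i : ℕ) + 1 :=
  rfl

lemma revPerm_step (n : ℕ) : (Fin.revPerm : Perm (Fin (n + 2))) =
    Equiv.swap 0 (Fin.last (n + 1)) *
      Equiv.Perm.viaFintypeEmbedding Fin.revPerm (embSucc n) := by
  ext x
  rcases eq_or_ne x 0 with rfl | hx0
  · have hnr : (0 : Fin (n+2)) ∉ Set.range (embSucc n) := by
      rintro ⟨i, hi⟩
      have := congrArg Fin.val hi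
      simp [embSucc_val] at this
    rw [Equiv.Perm.mul_apply, Equiv.Perm.viaFintypeEmbedding_apply_notMem_range _ _ hnr,
      Equiv.swap_apply_left]
    simp [Fin.val_rev, Fin.val_last]
  rcases eq_or_ne x (Fin.last (n+1)) with rfl | hxl
  · have hnr : (Fin.last (n+1)) ∉ Set.range (embSucc n) := by
      rintro ⟨i, hi⟩
      have := congrArg Fin.val hi
      have hlt := i.isLt
      simp [embSucc_val, Fin.val_last] at this
      omega
    rw [Equiv.Perm.mul_apply, Equiv.Perm.viaFintypeEmbedding_apply_notMem_range _ _ hnr,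
      Equiv.swap_apply_right]
    simp [Fin.val_rev, Fin.val_last]
  · have hx1 : 1 ≤ (x : ℕ) := by
      rcases Nat.eq_zero_or_pos (x : ℕ) with h | h
      · exact absurd (Fin.ext h) hx0
      · exact h
    have hxn : (x : ℕ) ≤ n + 1 := by omega
    have hxn' : (x : ℕ) < n + 1 := by
      rcases lt_or_eq_of_le hxn with h | h
      · exact h
      · exact absurd (Fin.ext (by simp [Fin.val_last, h])) hxl
    set i : Fin n := ⟨(x : ℕ) - 1, by omega⟩ with hi
    have hfi : embSucc n i = x := by
      apply Fin.ext
      simp [embSucc_val, hi]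
      omega
    rw [Equiv.Perm.mul_apply, ← hfi, Equiv.Perm.viaFintypeEmbedding_apply_image]
    have hval : ((embSucc n (Fin.revPerm i)) : ℕ) = n + 1 - (x : ℕ) := by
      simp [embSucc_val, Fin.val_rev, hi]
      omega
    rw [Equiv.swap_apply_of_ne_of_ne]
    · rw [hfi, hval, Fin.revPerm_apply, Fin.val_rev]
      omega
    · intro h
      have := congrArg Fin.val h
      rw [hval] at this
      simp at this
      omega
    · intro h
      have := congrArg Fin.val h
      rw [hval, Fin.val_last] at this
      omega

lemma sign_revPerm : ∀ n : ℕ, Equiv.Perm.sign (Fin.revPerm : Perm (Fin n)) = (-1) ^ (n / 2) := by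
  intro n
  induction n using Nat.strong_induction_on with
  | _ n ih =>
    match n with
    | 0 =>
      have : (Fin.revPerm : Perm (Fin 0)) = 1 := by ext x; exact x.elim0
      rw [this, map_one]; rfl
    | 1 =>
      have : (Fin.revPerm : Perm (Fin 1)) = 1 := by ext x; simp [Subsingleton.elim x.rev x]
      rw [this, map_one]; rfl
    | (k + 2) =>
      rw [revPerm_step k, map_mul]
      have h0l : (0 : Fin (k+2)) ≠ Fin.last (k+1) := by
        intro h
        have := congrArg Fin.val h
        simp [Fin.val_last] at this
      rw [Equiv.Perm.sign_swap h0l]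
      have : Equiv.Perm.sign (Equiv.Perm.viaFintypeEmbedding Fin.revPerm (embSucc k)) =
          Equiv.Perm.sign (Fin.revPerm : Perm (Fin k)) := by
        rw [Equiv.Perm.viaFintypeEmbedding, Equiv.Perm.sign_extendDomain]
      rw [this, ih k (by omega)]
      have : (k + 2) / 2 = k / 2 + 1 := by omega
      rw [this, pow_succ]
      exact (mul_comm _ _)


lemma exists_P {m : ℕ} (h4 : (m + 1) % 4 = 0 ∨ (m + 1) % 4 = 3) (sa sb : Fin (m + 1)) :
    ∃ P : Perm (Fin (m + 1)), P sa = sb ∧ Equiv.Perm.sign P = 1 ∧ mixOff P sa := by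
  by_cases hE : Even ((sa.rev : ℕ) + (sb.rev : ℕ))
  · exact ⟨Phi sa sb, Phi_apply_self sa sb,
      by rw [sign_Phi]; exact hE.neg_one_pow, mixOff_Phi sa sb⟩
  · refine ⟨Psi sa sb, Psi_apply_self sa sb, ?_, mixOff_Psi sa sb⟩
    have hψ : Psi sa sb = Fin.revPerm * Phi sa sb.rev := rfl
    rw [hψ, map_mul, sign_revPerm, sign_Phi, Fin.rev_rev, ← pow_add]
    apply Even.neg_one_pow
    have h1 : (sa.rev : ℕ) = m - (sa : ℕ) := by rw [Fin.val_rev]; omega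
    have h2 : (sb.rev : ℕ) = m - (sb : ℕ) := by rw [Fin.val_rev]; omega
    have hA := sa.isLt
    have hB := sb.isLt
    rw [Nat.not_even_iff] at hE
    rw [h1, h2] at hE
    rw [Nat.even_iff, h1]
    omega

end Stmt10Aux

/-- for `n ≡ 0, 3 (mod 4)`, any two rank-`n-1` elements of `AM_n` are
`J`-related in `AM_n`. -/
theorem stmt10 {n : ℕ} (hn : 2 ≤ n) (h4 : n % 4 = 0 ∨ n % 4 = 3)
    (a b : PT n) (ha : a ∈ AM n) (hb : b ∈ AM n)
    (hra : prank a = n - 1) (hrb : prank b = n - 1) :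
    JRelIn (AM n) a b := by
  obtain ⟨m, rfl⟩ : ∃ m, n = m + 1 := ⟨n - 1, by omega⟩
  obtain ⟨sa, σa, hfa, hsa, hma⟩ := Stmt10Aux.charAM a ha hra (by omega)
  obtain ⟨sb, σb, hfb, hsb, hmb⟩ := Stmt10Aux.charAM b hb hrb (by omega)
  obtain ⟨P, hP1, hP2, hP3⟩ := Stmt10Aux.exists_P h4 sa sb
  constructor
  · obtain ⟨u, v, hu, hv, he⟩ := Stmt10Aux.jhalf hsa hsb hma hmb P hP1 hP2 hP3
    exact ⟨u, v, hu, hv, by rw [hfa, hfb]; exact he⟩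
  · have hP1' : P.symm sb = sa := by rw [← hP1, Equiv.symm_apply_apply]
    have hP2' : Equiv.Perm.sign P.symm = 1 := by rw [Equiv.Perm.sign_symm, hP2]
    have hP3' : Stmt10Aux.mixOff P.symm sb := hP1 ▸ Stmt10Aux.mixOff_symm hP3
    obtain ⟨u, v, hu, hv, he⟩ := Stmt10Aux.jhalf hsb hsa hmb hma P.symm hP1' hP2' hP3'
    exact ⟨u, v, hu, hv, by rw [hfa, hfb]; exact he⟩
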